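/- Let n, k be positive integers with k ≤ n, and let L be a real 2n×2k matrix satisfying Lᵀ J_{2n} L = J_{2k} (i.e., the columns of L form k symplectic pairs, so L is the Jacobian of a symplectic parameterization). Then the Gram determinant satisfies det(Lᵀ L) ≥ 1. Consequently the 2k-dimensional volume of the parallelepiped spanned by the columns of L is at least 1, the volume of the standard parameterizing cube (linear/differential version of the Volume Expansion of Parasymplectic 2k-Volumes Theorem). -/

import Mathlib

open Matrix

section CauchyBinet

variable {m n : Type*} [Fintype m] [Fintype n] [DecidableEq m] [DecidableEq n]
variable {R : Type*} [CommRing R]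

open Equiv Finset Function

local notation "ε " σ:arg => ((Equiv.Perm.sign σ : ℤ) : R)

theorem binet_raw (A B : Matrix n m R) :
    det (Aᵀ * B) = ∑ f : m → n, (∏ i, B (f i) i) * det (A.submatrix f id) := by
  have h1 : det (Aᵀ * B)
      = ∑ f : m → n, ∑ σ : Perm m, ε σ * ∏ i, A (f i) (σ i) * B (f i) i := by
    simp only [Matrix.det_apply', Matrix.mul_apply, Matrix.transpose_apply,
      Finset.prod_univ_sum, Finset.mul_sum, Fintype.piFinset_univ]
    rw [Finset.sum_comm]
  rw [h1]
  refine Finset.sum_congr rfl fun f _ => ?_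
  calc ∑ σ : Perm m, ε σ * ∏ i, A (f i) (σ i) * B (f i) i
      = ∑ σ : Perm m, (∏ i, B (f i) i) * (ε σ * ∏ i, (A.submatrix f id)ᵀ (σ i) i) := by
        refine Finset.sum_congr rfl fun σ _ => ?_
        simp only [Matrix.transpose_apply, Matrix.submatrix_apply, id_eq,
          Finset.prod_mul_distrib]
        ring
    _ = (∏ i, B (f i) i) * det (A.submatrix f id) := by
        rw [← Finset.mul_sum, ← Matrix.det_apply', Matrix.det_transpose]

theorem binet_sym (A B : Matrix n m R) :
    ∑ f : m → n, det (A.submatrix f id) * det (B.submatrix f id)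
      = (Nat.factorial (Fintype.card m)) • det (Aᵀ * B) := by
  have h1 : ∀ f : m → n, det (A.submatrix f id) * det (B.submatrix f id)
      = ∑ σ : Perm m, ε σ * (det (A.submatrix f id) * ∏ i, B (f (σ i)) i) := by
    intro f
    rw [show det (B.submatrix f id) = ∑ σ : Perm m, ε σ * ∏ i, B (f (σ i)) i from by
      rw [Matrix.det_apply']; simp only [Matrix.submatrix_apply, id_eq]]
    rw [Finset.mul_sum]
    exact Finset.sum_congr rfl fun σ _ => by ring
  simp only [h1]
  rw [Finset.sum_comm]
  have h2 : ∀ σ : Perm m,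
      (∑ f : m → n, ε σ * (det (A.submatrix f id) * ∏ i, B (f (σ i)) i))
        = det (Aᵀ * B) := by
    intro σ
    have step : (∑ f : m → n, ε σ * (det (A.submatrix f id) * ∏ i, B (f (σ i)) i))
        = ∑ g : m → n, ε σ * (det (A.submatrix (g ∘ ⇑σ⁻¹) id) * ∏ i, B (g i) i) := by
      refine Fintype.sum_equiv (Equiv.arrowCongr σ⁻¹ (Equiv.refl n)) _ _ (fun f => ?_)
      have hfun : ((Equiv.arrowCongr σ⁻¹ (Equiv.refl n)) f ∘ ⇑σ⁻¹) = f := by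
        funext x; simp [Equiv.Perm.inv_def]
      have happ : ∀ i, (σ⁻¹.arrowCongr (Equiv.refl n)) f i = f (σ i) :=
        fun i => by simp [Equiv.Perm.inv_def]
      rw [hfun]
      simp only [happ]
    rw [step]
    have h4 : ((Equiv.Perm.sign σ : ℤ) : R) * ((Equiv.Perm.sign σ⁻¹ : ℤ) : R) = 1 := by
      rw [Equiv.Perm.sign_inv, ← Int.cast_mul, ← Units.val_mul, Int.units_mul_self,
        Units.val_one, Int.cast_one]
    calc ∑ g : m → n, ε σ * (det (A.submatrix (g ∘ ⇑σ⁻¹) id) * ∏ i, B (g i) i)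
        = ∑ g : m → n, (∏ i, B (g i) i) * det (A.submatrix g id) := by
          refine Finset.sum_congr rfl fun g _ => ?_
          have h3 : A.submatrix (g ∘ ⇑σ⁻¹) id = (A.submatrix g id).submatrix ⇑σ⁻¹ id := by
            ext i j; simp
          rw [h3, Matrix.det_permute]
          linear_combination ((A.submatrix g id).det * (∏ i, B (g i) i)) * h4
      _ = det (Aᵀ * B) := (binet_raw A B).symm
  rw [Finset.sum_congr rfl fun σ _ => h2 σ]
  simp [Finset.sum_const, Fintype.card_perm]

/-- Cauchy–Schwarz inequality for Gram determinants. -/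
theorem det_gram_cauchy_schwarz (A B : Matrix n m ℝ) :
    det (Aᵀ * B) ^ 2 ≤ det (Aᵀ * A) * det (Bᵀ * B) := by
  set N := Nat.factorial (Fintype.card m) with hN
  have hNpos : (0 : ℝ) < (N : ℝ) := Nat.cast_pos.mpr (Nat.factorial_pos _)
  have key := Finset.sum_mul_sq_le_sq_mul_sq Finset.univ
    (fun f : m → n => det (A.submatrix f id)) (fun f => det (B.submatrix f id))
  have hAB := binet_sym A B
  have hAA := binet_sym A A
  have hBB := binet_sym B B
  rw [hAB] at key
  have e1 : (∑ f : m → n, det (A.submatrix f id) ^ 2) = N • det (Aᵀ * A) := by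
    simpa [sq] using hAA
  have e2 : (∑ f : m → n, det (B.submatrix f id) ^ 2) = N • det (Bᵀ * B) := by
    simpa [sq] using hBB
  rw [e1, e2] at key
  have hNc : ∀ x : ℝ, (N : ℕ) • x = (N : ℝ) * x := fun x => nsmul_eq_mul N x
  rw [hNc, hNc, hNc] at key
  have h3 : (N:ℝ)^2 * ((Aᵀ * B).det^2) ≤ (N:ℝ)^2 * ((Aᵀ * A).det * (Bᵀ * B).det) := by
    calc (N:ℝ)^2 * ((Aᵀ * B).det^2) = ((N:ℝ) * (Aᵀ * B).det)^2 := by ring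
      _ ≤ (N:ℝ) * (Aᵀ * A).det * ((N:ℝ) * (Bᵀ * B).det) := key
      _ = (N:ℝ)^2 * ((Aᵀ * A).det * (Bᵀ * B).det) := by ring
  exact le_of_mul_le_mul_left h3 (by positivity)

end CauchyBinet

/-- The standard symplectic matrix `J` on `ℝ^{2m}`, with coordinates ordered in
symplectic pairs `(p₁,q₁,…,p_m,q_m)`: block-diagonal with `m` copies of
`[[0,-1],[1,0]]` down the diagonal. -/
def symplJ (m : ℕ) : Matrix (Fin (2 * m)) (Fin (2 * m)) ℝ :=
  Matrix.of fun i j =>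
    if i.val + 1 = j.val ∧ i.val % 2 = 0 then (-1 : ℝ)
    else if j.val + 1 = i.val ∧ j.val % 2 = 0 then 1 else 0

theorem symplJ_transpose (m : ℕ) : (symplJ m)ᵀ = -symplJ m := by
  ext i j
  simp only [transpose_apply, Matrix.neg_apply, symplJ, of_apply]
  split_ifs <;> first | (exfalso; omega) | norm_num

theorem symplJ_mul_self (m : ℕ) : symplJ m * symplJ m = -1 := by
  ext i j
  rw [Matrix.mul_apply]
  rcases Nat.even_or_odd i.val with hi | hi
  · have hi' : i.val % 2 = 0 := Nat.even_iff.mp hi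
    have hlt : i.val + 1 < 2 * m := by have := i.isLt; omega
    rw [Finset.sum_eq_single (⟨i.val + 1, hlt⟩ : Fin (2 * m))]
    · simp only [symplJ, of_apply, Matrix.neg_apply, one_apply, Fin.ext_iff, true_and, and_true]
      split_ifs <;> first | (exfalso; omega) | norm_num
    · intro b _ hb
      have hbv : b.val ≠ i.val + 1 := fun h => hb (Fin.ext h)
      have hz : symplJ m i b = 0 := by
        simp only [symplJ, of_apply]
        split_ifs <;> first | rfl | (exfalso; omega)
      rw [hz, zero_mul]
    · intro h; exact absurd (Finset.mem_univ _) h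
  · have hi' : i.val % 2 = 1 := Nat.odd_iff.mp hi
    have hlt : i.val - 1 < 2 * m := by have := i.isLt; omega
    rw [Finset.sum_eq_single (⟨i.val - 1, hlt⟩ : Fin (2 * m))]
    · simp only [symplJ, of_apply, Matrix.neg_apply, one_apply, Fin.ext_iff, true_and, and_true]
      split_ifs <;> first | (exfalso; omega) | norm_num
    · intro b _ hb
      have hbv : b.val ≠ i.val - 1 := fun h => hb (Fin.ext h)
      have hz : symplJ m i b = 0 := by
        simp only [symplJ, of_apply]
        split_ifs <;> first | rfl | (exfalso; omega)
      rw [hz, zero_mul]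
    · intro h; exact absurd (Finset.mem_univ _) h

theorem symplJ_mul_transpose (m : ℕ) : symplJ m * (symplJ m)ᵀ = 1 := by
  rw [symplJ_transpose, Matrix.mul_neg, symplJ_mul_self, neg_neg]

/-- **Volume expansion of parasymplectic 2k-volumes (linear version).**
If the columns of a real `2n × 2k` matrix `L` form `k` symplectic pairs
(`Lᵀ J_{2n} L = J_{2k}`), then the Gram determinant `det(Lᵀ L)` is at least `1`;
consequently the `2k`-volume `√det(LᵀL)` of the parallelepiped spanned by the
columns of `L` is at least `1`. -/
theorem gram_det_ge_one_of_symplectic_columns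
    (n k : ℕ) (hk : 0 < k) (hkn : k ≤ n)
    (L : Matrix (Fin (2 * n)) (Fin (2 * k)) ℝ)
    (hL : Lᵀ * symplJ n * L = symplJ k) :
    1 ≤ (Lᵀ * L).det ∧ 1 ≤ Real.sqrt (Lᵀ * L).det := by
  set A : Matrix (Fin (2 * n)) (Fin (2 * k)) ℝ := (symplJ n)ᵀ * L with hA
  have hAt : Aᵀ = Lᵀ * symplJ n := by
    rw [hA, Matrix.transpose_mul, Matrix.transpose_transpose]
  have hAB : Aᵀ * L = symplJ k := by rw [hAt]; exact hL
  have hAA : Aᵀ * A = Lᵀ * L := by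
    rw [hAt, hA, ← Matrix.mul_assoc, Matrix.mul_assoc (Lᵀ) (symplJ n) ((symplJ n)ᵀ),
      symplJ_mul_transpose, Matrix.mul_one]
  have hdetJ : det (symplJ k) ^ 2 = 1 := by
    have h := congrArg det (symplJ_mul_transpose k)
    rwa [Matrix.det_mul, Matrix.det_transpose, ← sq, Matrix.det_one] at h
  have key := det_gram_cauchy_schwarz A L
  rw [hAB, hAA, hdetJ] at key
  -- key : 1 ≤ det (Lᵀ L) * det (Lᵀ L)
  have hnn : 0 ≤ (Lᵀ * L).det := by
    have hP : (Lᵀ * L).PosSemidef := by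
      have := Matrix.posSemidef_conjTranspose_mul_self L
      rwa [Matrix.conjTranspose_eq_transpose_of_trivial] at this
    rw [hP.1.det_eq_prod_eigenvalues]
    exact Finset.prod_nonneg fun i _ => hP.eigenvalues_nonneg i
  have h1 : 1 ≤ (Lᵀ * L).det := by nlinarith
  refine ⟨h1, ?_⟩
  calc (1 : ℝ) = Real.sqrt 1 := by simp
    _ ≤ Real.sqrt (Lᵀ * L).det := Real.sqrt_le_sqrt h1
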